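/- Let A₁,…,A_k, B₁,…,B_k be simultaneously diagonalized by S with eigenvalue vectors aʲ, bʲ, and let Γ_{rs} = ∑_j aʲ_r bʲ_s. Then the solution set of the homogeneous equation ∑_j A_j X B_j = 0 equals { S Y S⁻¹ : Y ∈ M_n(ℂ), y_{rs} = 0 whenever Γ_{rs} ≠ 0 }, and it is a linear subspace of M_n(ℂ) whose dimension equals the number of pairs (r,s) with Γ_{rs} = 0. -/

import Mathlib

open Matrix

/-- The solution set of the homogeneous equation `∑ j, A j * X * B j = 0` equals
`{S Y S⁻¹ : Y_{rs} = 0 whenever Γ_{rs} ≠ 0}`; it is a linear subspace whose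
dimension equals the number of pairs `(r,s)` with `Γ_{rs} = 0`. -/
theorem stmt7 {n k : ℕ} (A B : Fin k → Matrix (Fin n) (Fin n) ℂ)
    (S : Matrix (Fin n) (Fin n) ℂ)
    (a b : Fin k → Fin n → ℂ)
    (hS : IsUnit S.det)
    (hA : ∀ j, S⁻¹ * A j * S = Matrix.diagonal (a j))
    (hB : ∀ j, S⁻¹ * B j * S = Matrix.diagonal (b j)) :
    (∀ X : Matrix (Fin n) (Fin n) ℂ,
        (∑ j, A j * X * B j = 0) ↔
          ∃ Y : Matrix (Fin n) (Fin n) ℂ,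
            (∀ r s, (∑ j, a j r * b j s) ≠ 0 → Y r s = 0) ∧ X = S * Y * S⁻¹) ∧
    ∃ W : Submodule ℂ (Matrix (Fin n) (Fin n) ℂ),
      (∀ X, X ∈ W ↔ ∑ j, A j * X * B j = 0) ∧
      Module.finrank ℂ W =
        Set.ncard {p : Fin n × Fin n | (∑ j, a j p.1 * b j p.2) = 0} := by
  classical
  have hSS : S * S⁻¹ = 1 := Matrix.mul_nonsing_inv S hS
  have hSS' : S⁻¹ * S = 1 := Matrix.nonsing_inv_mul S hS
  have hAe : ∀ j, A j = S * Matrix.diagonal (a j) * S⁻¹ := by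
    intro j
    have := congrArg (fun M => S * M * S⁻¹) (hA j)
    rw [← this]
    rw [show S * (S⁻¹ * A j * S) * S⁻¹ = (S * S⁻¹) * A j * (S * S⁻¹) by
      noncomm_ring, hSS, one_mul, mul_one]
  have hBe : ∀ j, B j = S * Matrix.diagonal (b j) * S⁻¹ := by
    intro j
    have := congrArg (fun M => S * M * S⁻¹) (hB j)
    rw [← this]
    rw [show S * (S⁻¹ * B j * S) * S⁻¹ = (S * S⁻¹) * B j * (S * S⁻¹) by
      noncomm_ring, hSS, one_mul, mul_one]
  -- key characterization
  have key : ∀ X : Matrix (Fin n) (Fin n) ℂ,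
      (∑ j, A j * X * B j = 0) ↔
        ∀ r s, (∑ j, a j r * b j s) ≠ 0 → (S⁻¹ * X * S) r s = 0 := by
    intro X
    set Y := S⁻¹ * X * S with hY
    have hsum : ∑ j, A j * X * B j
        = S * (∑ j, Matrix.diagonal (a j) * Y * Matrix.diagonal (b j)) * S⁻¹ := by
      rw [Finset.mul_sum, Finset.sum_mul]
      refine Finset.sum_congr rfl fun j _ => ?_
      rw [hAe j, hBe j, hY]
      rw [show S * Matrix.diagonal (a j) * S⁻¹ * X * (S * Matrix.diagonal (b j) * S⁻¹)
          = S * (Matrix.diagonal (a j) * (S⁻¹ * X * S) * Matrix.diagonal (b j)) * S⁻¹ by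
        noncomm_ring]
    rw [hsum]
    constructor
    · intro h r s hΓ
      have h0 : (∑ j, Matrix.diagonal (a j) * Y * Matrix.diagonal (b j)) = 0 := by
        have := congrArg (fun M => S⁻¹ * M * S) h
        simp only [Matrix.mul_zero, Matrix.zero_mul] at this
        rw [show S⁻¹ * (S * (∑ j, Matrix.diagonal (a j) * Y * Matrix.diagonal (b j)) * S⁻¹) * S
            = (S⁻¹ * S) * (∑ j, Matrix.diagonal (a j) * Y * Matrix.diagonal (b j)) * (S⁻¹ * S) by
          noncomm_ring, hSS', one_mul, mul_one] at this
        exact this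
      have := congrFun (congrFun h0 r) s
      simp only [Matrix.sum_apply, Matrix.mul_diagonal, Matrix.diagonal_mul,
        Matrix.zero_apply] at this
      have hfact : (∑ j, a j r * b j s) * Y r s = 0 := by
        rw [Finset.sum_mul]
        rw [← this]
        · refine Finset.sum_congr rfl fun j _ => by ring
      rcases mul_eq_zero.mp hfact with h1 | h2
      · exact absurd h1 hΓ
      · exact h2
    · intro h
      have h0 : (∑ j, Matrix.diagonal (a j) * Y * Matrix.diagonal (b j)) = 0 := by
        ext r s
        simp only [Matrix.sum_apply, Matrix.diagonal_mul, Matrix.mul_diagonal,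
          Matrix.zero_apply]
        have : ∑ j, a j r * Y r s * b j s = (∑ j, a j r * b j s) * Y r s := by
          rw [Finset.sum_mul]; exact Finset.sum_congr rfl fun j _ => by ring
        rw [this]
        by_cases hΓ : (∑ j, a j r * b j s) = 0
        · rw [hΓ, zero_mul]
        · rw [h r s hΓ, mul_zero]
      rw [h0, Matrix.mul_zero, Matrix.zero_mul]
  constructor
  · intro X
    rw [key X]
    constructor
    · intro h
      refine ⟨S⁻¹ * X * S, h, ?_⟩
      rw [show S * (S⁻¹ * X * S) * S⁻¹ = (S * S⁻¹) * X * (S * S⁻¹) by noncomm_ring,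
        hSS, one_mul, mul_one]
    · rintro ⟨Y, hY, rfl⟩
      intro r s hΓ
      rw [show S⁻¹ * (S * Y * S⁻¹) * S = (S⁻¹ * S) * Y * (S⁻¹ * S) by noncomm_ring,
        hSS', one_mul, mul_one]
      exact hY r s hΓ
  · -- the submodule
    refine ⟨
      { carrier := {X | ∑ j, A j * X * B j = 0}
        add_mem' := ?_
        zero_mem' := ?_
        smul_mem' := ?_ }, fun X => Iff.rfl, ?_⟩
    · intro X Y hX hY
      simp only [Set.mem_setOf_eq] at *
      have : ∀ j, A j * (X + Y) * B j = A j * X * B j + A j * Y * B j := by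
        intro j; noncomm_ring
      simp only [this, Finset.sum_add_distrib, hX, hY, add_zero]
    · simp only [Set.mem_setOf_eq, Matrix.mul_zero, Matrix.zero_mul,
        Finset.sum_const_zero]
    · intro c X hX
      simp only [Set.mem_setOf_eq] at *
      have : ∀ j, A j * (c • X) * B j = c • (A j * X * B j) := by
        intro j
        rw [Matrix.mul_smul, Matrix.smul_mul]
      simp only [this, ← Finset.smul_sum, hX, smul_zero]
    · -- dimension count
      set Z : Set (Fin n × Fin n) := {p : Fin n × Fin n | (∑ j, a j p.1 * b j p.2) = 0}
        with hZ
      set W : Submodule ℂ (Matrix (Fin n) (Fin n) ℂ) :=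
        { carrier := {X | ∑ j, A j * X * B j = 0}
          add_mem' := by
            intro X Y hX hY
            simp only [Set.mem_setOf_eq] at *
            have : ∀ j, A j * (X + Y) * B j = A j * X * B j + A j * Y * B j := by
              intro j; noncomm_ring
            simp only [this, Finset.sum_add_distrib, hX, hY, add_zero]
          zero_mem' := by
            simp only [Set.mem_setOf_eq, Matrix.mul_zero, Matrix.zero_mul,
              Finset.sum_const_zero]
          smul_mem' := by
            intro c X hX
            simp only [Set.mem_setOf_eq] at *
            have : ∀ j, A j * (c • X) * B j = c • (A j * X * B j) := by
              intro j
              rw [Matrix.mul_smul, Matrix.smul_mul]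
            simp only [this, ← Finset.smul_sum, hX, smul_zero] } with hW
      have hmem : ∀ X, X ∈ W ↔ ∑ j, A j * X * B j = 0 := fun X => Iff.rfl
      -- linear equiv W ≃ₗ (Z → ℂ)
      have hinv : ∀ f : Z → ℂ,
          (S * (Matrix.of fun r s =>
            if h : (r, s) ∈ Z then f ⟨(r, s), h⟩ else 0) * S⁻¹) ∈ W := by
        intro f
        rw [hmem, key]
        intro r s hΓ
        rw [show S⁻¹ * (S * (Matrix.of fun r s =>
              if h : (r, s) ∈ Z then f ⟨(r, s), h⟩ else 0) * S⁻¹) * S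
            = (S⁻¹ * S) * (Matrix.of fun r s =>
              if h : (r, s) ∈ Z then f ⟨(r, s), h⟩ else 0) * (S⁻¹ * S) by noncomm_ring,
          hSS', one_mul, mul_one]
        simp only [Matrix.of_apply]
        rw [dif_neg]
        exact fun h => hΓ h
      let e : W ≃ₗ[ℂ] (Z → ℂ) :=
        { toFun := fun x p => (S⁻¹ * (x : Matrix (Fin n) (Fin n) ℂ) * S) p.1.1 p.1.2
          map_add' := by
            intro x y
            funext p
            simp [Matrix.mul_add, Matrix.add_mul]
          map_smul' := by
            intro c x
            funext p
            simp [Matrix.mul_smul, Matrix.smul_mul]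
          invFun := fun f => ⟨S * (Matrix.of fun r s =>
              if h : (r, s) ∈ Z then f ⟨(r, s), h⟩ else 0) * S⁻¹, hinv f⟩
          left_inv := by
            intro x
            obtain ⟨X, hX⟩ := x
            apply Subtype.ext
            simp only
            rw [show S * (Matrix.of fun r s =>
                  if h : (r, s) ∈ Z then (S⁻¹ * X * S) r s else 0) * S⁻¹
                = X from ?_]
            have hX' := (key X).mp ((hmem X).mp hX)
            have hM : (Matrix.of fun r s =>
                if h : (r, s) ∈ Z then (S⁻¹ * X * S) r s else 0) = S⁻¹ * X * S := by
              ext r s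
              simp only [Matrix.of_apply]
              by_cases h : (r, s) ∈ Z
              · rw [dif_pos h]
              · rw [dif_neg h, hX' r s (by simpa [hZ, Set.mem_setOf_eq] using h)]
            rw [hM, show S * (S⁻¹ * X * S) * S⁻¹ = (S * S⁻¹) * X * (S * S⁻¹) by noncomm_ring,
              hSS, one_mul, mul_one]
          right_inv := by
            intro f
            funext p
            simp only
            rw [show S⁻¹ * (S * (Matrix.of fun r s =>
                  if h : (r, s) ∈ Z then f ⟨(r, s), h⟩ else 0) * S⁻¹) * S
                = (S⁻¹ * S) * (Matrix.of fun r s =>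
                  if h : (r, s) ∈ Z then f ⟨(r, s), h⟩ else 0) * (S⁻¹ * S) by noncomm_ring,
              hSS', one_mul, mul_one]
            simp only [Matrix.of_apply]
            rw [dif_pos p.2] }
      rw [e.finrank_eq]
      rw [Module.finrank_pi]
      rw [← Nat.card_coe_set_eq, Nat.card_eq_fintype_card]
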